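/- Let v ≥ 3 and N be positive integers, and let S be a set of positive integers containing no homogeneous arithmetic progression of length v, i.e., there is no positive integer t with t, 2t, …, vt all in S. Let A = {a₁, …, a_d} ⊆ [1, N] be a set of d distinct positive integers such that every nonempty subset sum Σ_{i∈F} a_i (F a nonempty subset of {1,…,d}) lies in S ∩ [1, N]. Then for every positive integer h and every integer n, the number of h-element subsets of A whose elements sum to n is at most h! · (v−1)^{h−1}. -/

import Mathlib

open Finset

private lemma disj_bound (v n : ℕ) (hn : 0 < n) (S : Set ℕ)
    (hS : ¬ ∃ t : ℕ, 0 < t ∧ ∀ j : ℕ, 1 ≤ j → j ≤ v → j * t ∈ S)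
    (A : Finset ℕ)
    (hsum : ∀ F ⊆ A, F.Nonempty → F.sum id ∈ S)
    (𝒟 : Finset (Finset ℕ)) (hD : ∀ D ∈ 𝒟, D ⊆ A ∧ D.sum id = n)
    (hdisj : (𝒟 : Set (Finset ℕ)).PairwiseDisjoint id) :
    𝒟.card ≤ v - 1 := by
  by_contra hcard
  push_neg at hcard
  have hv' : v ≤ 𝒟.card := by omega
  apply hS
  refine ⟨n, hn, fun j hj1 hjv => ?_⟩
  obtain ⟨T, hT, hTcard⟩ := Finset.exists_subset_card_eq (s := 𝒟) (n := j) (le_trans hjv hv')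
  have hTdisj : (T : Set (Finset ℕ)).PairwiseDisjoint id :=
    hdisj.subset (by exact_mod_cast hT)
  have hsumU : (T.biUnion id).sum id = j * n := by
    rw [Finset.sum_biUnion hTdisj]
    have hc : ∀ D ∈ T, ∑ i ∈ id D, id i = n := fun D hD' => (hD D (hT hD')).2
    rw [Finset.sum_congr rfl hc]
    simp [hTcard, mul_comm]
  have hUsub : T.biUnion id ⊆ A := by
    intro x hx
    simp only [Finset.mem_biUnion, id] at hx
    obtain ⟨D, hDT, hxD⟩ := hx
    exact (hD D (hT hDT)).1 hxD
  have hUne : (T.biUnion id).Nonempty := by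
    have hTne : T.Nonempty := Finset.card_pos.mp (by omega)
    obtain ⟨D, hDT⟩ := hTne
    have hDne : D.Nonempty := by
      by_contra hD0
      rw [Finset.not_nonempty_iff_eq_empty] at hD0
      have := (hD D (hT hDT)).2
      simp [hD0] at this; omega
    obtain ⟨x, hx⟩ := hDne
    exact ⟨x, Finset.mem_biUnion.mpr ⟨D, hDT, hx⟩⟩
  have := hsum _ hUsub hUne
  rwa [hsumU] at this

/-- A cube lemma for sets without homogeneous arithmetic progressions:
the number of `h`-element subsets of `A` summing to `n` is at most
`h! (v-1)^(h-1)`. -/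
theorem stmt_13 (v N : ℕ) (hv : 3 ≤ v) (hN : 0 < N) (S : Set ℕ)
    (hSpos : ∀ s ∈ S, 0 < s)
    (hS : ¬ ∃ t : ℕ, 0 < t ∧ ∀ j : ℕ, 1 ≤ j → j ≤ v → j * t ∈ S)
    (A : Finset ℕ) (hA : ∀ x ∈ A, 1 ≤ x ∧ x ≤ N)
    (hsum : ∀ F ⊆ A, F.Nonempty → F.sum id ∈ S ∧ F.sum id ≤ N) :
    ∀ h : ℕ, 0 < h → ∀ n : ℕ,
      (A.powerset.filter (fun F => F.card = h ∧ F.sum id = n)).card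
        ≤ h.factorial * (v - 1) ^ (h - 1) := by
  classical
  intro h
  induction h with
  | zero => omega
  | succ k ih =>
    intro _ n
    rcases Nat.eq_zero_or_pos k with hk0 | hkpos
    · -- base case h = 1
      subst hk0
      have hsub : (A.powerset.filter (fun F => F.card = 1 ∧ F.sum id = n)) ⊆ {{n}} := by
        intro F hF
        simp only [Finset.mem_filter, Finset.mem_powerset] at hF
        obtain ⟨hFA, hFc, hFs⟩ := hF
        obtain ⟨y, hy⟩ := Finset.card_eq_one.mp hFc
        subst hy
        simp only [Finset.sum_singleton, id] at hFs
        simp [hFs]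
      calc _ ≤ ({{n}} : Finset (Finset ℕ)).card := Finset.card_le_card hsub
        _ ≤ _ := by simp [Nat.factorial]
    · -- inductive step with k ≥ 1
      set 𝓕 := A.powerset.filter (fun F => F.card = k + 1 ∧ F.sum id = n) with h𝓕
      rcases Finset.eq_empty_or_nonempty 𝓕 with hFe | ⟨F₀, hF₀⟩
      · simp [hFe]
      have hmem : ∀ F ∈ 𝓕, F ⊆ A ∧ F.card = k + 1 ∧ F.sum id = n := by
        intro F hF
        simpa only [h𝓕, Finset.mem_filter, Finset.mem_powerset, and_assoc] using hF
      have hF₀' := hmem F₀ hF₀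
      have hF₀ne : F₀.Nonempty := Finset.card_pos.mp (by omega)
      have hn : 0 < n := by
        have := (hsum F₀ hF₀'.1 hF₀ne).1
        rw [hF₀'.2.2] at this
        exact hSpos n this
      -- choose a maximal pairwise disjoint subfamily
      set C := 𝓕.powerset.filter (fun 𝒟 : Finset (Finset ℕ) => (𝒟 : Set (Finset ℕ)).PairwiseDisjoint id) with hC
      have hCne : C.Nonempty := ⟨∅, by simp [hC]⟩
      obtain ⟨𝒟, h𝒟C, h𝒟max⟩ := Finset.exists_max_image C (fun D => D.card) hCne
      simp only [hC, Finset.mem_filter, Finset.mem_powerset] at h𝒟C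
      obtain ⟨h𝒟F, h𝒟disj⟩ := h𝒟C
      set U := 𝒟.biUnion id with hU
      -- every member of 𝓕 meets U
      have hmeet : ∀ F ∈ 𝓕, ∃ x ∈ F, x ∈ U := by
        intro F hF
        by_contra hcon
        push_neg at hcon
        have hFdU : ∀ D ∈ 𝒟, Disjoint F D := by
          intro D hD
          rw [Finset.disjoint_left]
          intro x hxF hxD
          exact hcon x hxF (Finset.mem_biUnion.mpr ⟨D, hD, hxD⟩)
        have hFnotin : F ∉ 𝒟 := by
          intro hFin
          have hFne : F.Nonempty := Finset.card_pos.mp (by have := (hmem F hF).2.1; omega)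
          obtain ⟨x, hx⟩ := hFne
          exact hcon x hx (Finset.mem_biUnion.mpr ⟨F, hFin, hx⟩)
        have hins : insert F 𝒟 ∈ C := by
          simp only [hC, Finset.mem_filter, Finset.mem_powerset]
          constructor
          · exact Finset.insert_subset hF h𝒟F
          · rw [Finset.coe_insert]
            refine Set.PairwiseDisjoint.insert h𝒟disj ?_
            intro D hD _
            exact hFdU D hD
        have := h𝒟max _ hins
        rw [Finset.card_insert_of_notMem hFnotin] at this
        omega
      -- card of U
      have h𝒟card : 𝒟.card ≤ v - 1 := by
        refine disj_bound v n hn S hS A (fun F hF hFne => (hsum F hF hFne).1) 𝒟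
          (fun D hD => ⟨(hmem D (h𝒟F hD)).1, (hmem D (h𝒟F hD)).2.2⟩) h𝒟disj
      have hUcard : U.card ≤ (v - 1) * (k + 1) := by
        calc U.card ≤ ∑ D ∈ 𝒟, D.card := Finset.card_biUnion_le
          _ = ∑ D ∈ 𝒟, (k + 1) := Finset.sum_congr rfl (fun D hD => (hmem D (h𝒟F hD)).2.1)
          _ = 𝒟.card * (k + 1) := by simp [mul_comm]
          _ ≤ (v - 1) * (k + 1) := Nat.mul_le_mul_right _ h𝒟card
      -- cover 𝓕 by the elements of U
      have hcover : 𝓕 ⊆ U.biUnion (fun x => 𝓕.filter (fun F => x ∈ F)) := by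
        intro F hF
        obtain ⟨x, hxF, hxU⟩ := hmeet F hF
        exact Finset.mem_biUnion.mpr ⟨x, hxU, Finset.mem_filter.mpr ⟨hF, hxF⟩⟩
      -- bound each fiber by the induction hypothesis
      have hfiber : ∀ x ∈ U, (𝓕.filter (fun F => x ∈ F)).card
          ≤ k.factorial * (v - 1) ^ (k - 1) := by
        intro x _
        have hinj : ∀ F ∈ 𝓕.filter (fun F => x ∈ F), F.erase x ∈
            A.powerset.filter (fun F => F.card = k ∧ F.sum id = n - x) := by
          intro F hF
          simp only [Finset.mem_filter] at hF
          obtain ⟨hF𝓕, hxF⟩ := hF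
          obtain ⟨hFA, hFc, hFs⟩ := hmem F hF𝓕
          have hxn : x ≤ n := by
            rw [← hFs]
            exact Finset.single_le_sum (fun i _ => Nat.zero_le (id i)) hxF
          have hsum' : x + (F.erase x).sum id = n := by
            rw [← hFs]
            exact Finset.add_sum_erase F id hxF
          simp only [Finset.mem_filter, Finset.mem_powerset]
          refine ⟨Finset.Subset.trans (Finset.erase_subset x F) hFA, ?_, by omega⟩
          rw [Finset.card_erase_of_mem hxF, hFc]
          omega
        have hinjOn : Set.InjOn (fun F => F.erase x)
            (𝓕.filter (fun F => x ∈ F) : Set (Finset ℕ)) := by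
          intro F₁ h₁ F₂ h₂ he
          simp only [Finset.coe_filter, Set.mem_setOf_eq] at h₁ h₂
          have he' : F₁.erase x = F₂.erase x := he
          rw [← Finset.insert_erase h₁.2, ← Finset.insert_erase h₂.2, he']
        calc (𝓕.filter (fun F => x ∈ F)).card
            ≤ (A.powerset.filter (fun F => F.card = k ∧ F.sum id = n - x)).card :=
              Finset.card_le_card_of_injOn _ hinj hinjOn
          _ ≤ k.factorial * (v - 1) ^ (k - 1) := ih hkpos (n - x)
      calc 𝓕.card ≤ (U.biUnion (fun x => 𝓕.filter (fun F => x ∈ F))).card :=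
            Finset.card_le_card hcover
        _ ≤ ∑ x ∈ U, (𝓕.filter (fun F => x ∈ F)).card := Finset.card_biUnion_le
        _ ≤ ∑ x ∈ U, k.factorial * (v - 1) ^ (k - 1) := Finset.sum_le_sum hfiber
        _ = U.card * (k.factorial * (v - 1) ^ (k - 1)) := by simp [mul_comm]
        _ ≤ ((v - 1) * (k + 1)) * (k.factorial * (v - 1) ^ (k - 1)) :=
            Nat.mul_le_mul_right _ hUcard
        _ = (k + 1).factorial * (v - 1) ^ ((k + 1) - 1) := by
            have h1 : (v - 1) * (v - 1) ^ (k - 1) = (v - 1) ^ k := by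
              conv_rhs => rw [show k = (k - 1) + 1 by omega]
              rw [pow_succ]
              ring
            rw [Nat.factorial_succ, Nat.succ_sub_one, ← h1]
            ring
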